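/- Let a > 0 and define φ(z) = 1 + z + a·z². Then Re(φ(z)) > 0 for all z in the open unit disk 𝔻 if and only if a ≤ (2 + √2)/4. -/

import Mathlib

open Complex Metric Set

set_option maxHeartbeats 1000000 in
theorem phi_re_pos_iff (a : ℝ) (ha : 0 < a) :
    (∀ z ∈ ball (0:ℂ) 1, 0 < (1 + z + (a : ℂ) * z ^ 2).re) ↔
      a ≤ (2 + Real.sqrt 2) / 4 := by
  have hs : Real.sqrt 2 ^ 2 = 2 := Real.sq_sqrt (by norm_num)
  have hs1 : (1:ℝ) ≤ Real.sqrt 2 := by nlinarith [Real.sqrt_nonneg 2]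
  constructor
  · intro h
    by_contra hc
    push_neg at hc
    have hc' : (2 + Real.sqrt 2)/4 < a := hc
    have hagt : 1/2 < a := by nlinarith
    set x : ℝ := -1/(4*a) with hxdef
    have hax : 4*a*x = -1 := by rw [hxdef]; field_simp
    have hx2 : x^2 < 1/4 := by nlinarith [sq_nonneg (2*x - 1), sq_nonneg (2*x+1)]
    have hcpos : 0 < 8*a^2 - 8*a + 1 := by
      nlinarith [mul_pos (by nlinarith : (0:ℝ) < a - (2 - Real.sqrt 2)/4)
        (by nlinarith : (0:ℝ) < a - (2 + Real.sqrt 2)/4)]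
    set ε : ℝ := min ((8*a^2 - 8*a + 1)/(16*a^2)) (1/2) with hεdef
    have hεpos : 0 < ε := by
      apply lt_min
      · positivity
      · norm_num
    have hεle : ε ≤ (8*a^2 - 8*a + 1)/(16*a^2) := min_le_left _ _
    have hε2 : ε ≤ 1/2 := min_le_right _ _
    have hynn : 0 ≤ 1 - x^2 - ε := by nlinarith
    set y : ℝ := Real.sqrt (1 - x^2 - ε) with hydef
    have hy2 : y^2 = 1 - x^2 - ε := Real.sq_sqrt hynn
    set z : ℂ := ⟨x, y⟩ with hzdef
    have hmem : z ∈ ball (0:ℂ) 1 := by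
      rw [mem_ball, dist_zero_right]
      have habs : ‖z‖^2 = x^2 + y^2 := by
        rw [Complex.sq_norm, Complex.normSq_apply]
        show x*x + y*y = x^2 + y^2
        ring
      nlinarith [norm_nonneg z]
    have hre : (1 + z + (a : ℂ) * z ^ 2).re = 1 + x + a*(x^2 - y^2) := by
      simp [hzdef, pow_two, Complex.add_re, Complex.mul_re, Complex.mul_im]
    have hpos := h z hmem
    rw [hre] at hpos
    have h16 : 16*a^2*ε ≤ 8*a^2 - 8*a + 1 := by
      rw [div_eq_mul_inv] at hεle
      calc 16*a^2*ε ≤ 16*a^2*((8*a^2 - 8*a + 1) * (16*a^2)⁻¹) := by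
              apply mul_le_mul_of_nonneg_left hεle (by positivity)
        _ = 8*a^2 - 8*a + 1 := by field_simp
    nlinarith [hpos, hy2, hax, h16, sq_nonneg (4*a*x + 1), mul_pos ha ha,
      mul_pos (mul_pos ha ha) ha, mul_pos ha hcpos]
  · intro hle z hz
    rw [mem_ball, dist_zero_right] at hz
    set x : ℝ := z.re with hxdef
    set y : ℝ := z.im with hydef
    have hxy : x^2 + y^2 < 1 := by
      have habs : ‖z‖^2 = x^2 + y^2 := by
        rw [Complex.sq_norm, Complex.normSq_apply]
        ring
      nlinarith [norm_nonneg z]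
    have hre : (1 + z + (a : ℝ) * z ^ 2).re = 1 + x + a*(x^2 - y^2) := by
      simp [hxdef, hydef, pow_two, Complex.add_re, Complex.mul_re, Complex.mul_im]
    rw [hre]
    have hx1 : -1 < x := by nlinarith [sq_nonneg y, sq_nonneg (x+1)]
    have hy2 : a*y^2 < a*(1 - x^2) := by
      apply mul_lt_mul_of_pos_left _ ha
      nlinarith
    rcases le_or_gt a (1/4) with hA | hA
    · have hfac : (0:ℝ) ≤ 2*a*x + 1 - 2*a := by
        nlinarith [mul_pos ha (show (0:ℝ) < x + 1 by linarith)]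
      nlinarith [mul_nonneg (show (0:ℝ) ≤ x + 1 by linarith) hfac, hy2]
    · have h8 : 0 ≤ 8*a - 8*a^2 - 1 := by
        nlinarith [mul_nonneg (show (0:ℝ) ≤ a - (2 - Real.sqrt 2)/4 by linarith)
          (show (0:ℝ) ≤ (2 + Real.sqrt 2)/4 - a by linarith), hs]
      nlinarith [sq_nonneg (4*a*x + 1), hy2, h8, mul_pos ha ha]
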